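/- In a finite projective plane of order q, every blocking set has at least q + 1 points, and a blocking set of exactly q + 1 points must consist of all points of a single line. -/

import Mathlib

open Configuration

/-- Key injection: if `x ∉ B` and `B` is a blocking set, there is an injection from
the lines through `x` into `B` picking a point of `B` on each line. -/
lemma blocking_exists_inj {P L : Type*} [Membership P L] [ProjectivePlane P L]
    (B : Set P) (hB : ∀ l : L, ∃ p ∈ B, p ∈ l) (x : P) (hx : x ∉ B) :
    ∃ g : {m : L // x ∈ m} → B, Function.Injective g ∧ ∀ m, (g m : P) ∈ m.val := by
  choose f hf1 hf2 using hB
  refine ⟨fun m => ⟨f m.val, hf1 m.val⟩, ?_, fun m => hf2 m.val⟩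
  intro m₁ m₂ h
  have h' : f m₁.val = f m₂.val := congrArg Subtype.val h
  have hmem : f m₁.val ∈ m₂.val := h' ▸ hf2 m₂.val
  rcases Nondegenerate.eq_or_eq (hf2 m₁.val) m₁.2 hmem m₂.2 with heq | heq
  · exact absurd (heq ▸ hf1 m₁.val) hx
  · exact Subtype.ext heq

/-- In a finite projective plane of order `q`, every blocking set has at least `q+1`
points, and a blocking set of exactly `q+1` points is the point set of a line. -/
theorem blocking_set_card {P L : Type*} [Membership P L] [ProjectivePlane P L]
    [Fintype P] [Fintype L] {q : ℕ} (hq : ProjectivePlane.order P L = q)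
    (B : Set P) (hB : ∀ l : L, ∃ p ∈ B, p ∈ l) :
    q + 1 ≤ B.ncard ∧ (B.ncard = q + 1 → ∃ l : L, B = {p : P | p ∈ l}) := by
  classical
  have hBfin : B.Finite := Set.toFinite B
  have hline : ∀ x : P, Nat.card {m : L // x ∈ m} = q + 1 := by
    intro x
    have := ProjectivePlane.lineCount_eq L x
    rw [hq] at this
    simpa [lineCount] using this
  -- lower bound via an injection from lines through a point not in B
  have hlower : ∀ x : P, x ∉ B → q + 1 ≤ B.ncard := by
    intro x hx
    obtain ⟨g, hginj, -⟩ := blocking_exists_inj B hB x hx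
    have h1 : Nat.card {m : L // x ∈ m} ≤ Nat.card B :=
      Nat.card_le_card_of_injective g hginj
    rw [hline x, Nat.card_coe_set_eq] at h1
    exact h1
  have hcardP : Fintype.card P = q ^ 2 + q + 1 := by
    rw [← hq]; exact ProjectivePlane.card_points P L
  have horder : 1 < q := hq ▸ ProjectivePlane.one_lt_order P L
  constructor
  · by_cases hx : ∃ x : P, x ∉ B
    · obtain ⟨x, hx⟩ := hx
      exact hlower x hx
    · push_neg at hx
      have : B = Set.univ := Set.eq_univ_of_forall hx
      rw [this, Set.ncard_univ, Nat.card_eq_fintype_card, hcardP]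
      nlinarith
  · intro hcard
    -- get two distinct points of B
    have h2B : 1 < B.ncard := by omega
    rw [Set.one_lt_ncard_iff hBfin] at h2B
    obtain ⟨a, b, ha, hb, hab⟩ := h2B
    refine ⟨HasLines.mkLine hab, ?_⟩
    set l : L := HasLines.mkLine hab with hl
    have hal : a ∈ l := (HasLines.mkLine_ax hab).1
    have hbl : b ∈ l := (HasLines.mkLine_ax hab).2
    have hSl : ({p : P | p ∈ l} : Set P).ncard = q + 1 := by
      have := ProjectivePlane.pointCount_eq P l
      rw [hq] at this
      rw [← Nat.card_coe_set_eq]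
      exact this
    -- show B ⊆ l
    have hsub : B ⊆ {p : P | p ∈ l} := by
      by_contra hsub
      rw [Set.not_subset] at hsub
      obtain ⟨c, hcB, hcl⟩ := hsub
      -- find x on l not in B
      have hBl : B ∩ {p : P | p ∈ l} ⊆ B \ {c} := by
        intro p ⟨hp1, hp2⟩
        exact ⟨hp1, fun h => hcl (h ▸ hp2)⟩
      have hBlcard : (B ∩ {p : P | p ∈ l}).ncard ≤ q := by
        calc (B ∩ {p : P | p ∈ l}).ncard ≤ (B \ {c}).ncard :=
              Set.ncard_le_ncard hBl hBfin.diff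
          _ = B.ncard - 1 := by rw [Set.ncard_diff_singleton_of_mem hcB]
          _ ≤ q := by omega
      have hex : ∃ x, x ∈ ({p : P | p ∈ l} : Set P) ∧ x ∉ B := by
        by_contra hex
        push_neg at hex
        have : ({p : P | p ∈ l} : Set P) ⊆ B ∩ {p : P | p ∈ l} :=
          fun p hp => ⟨hex p hp, hp⟩
        have := Set.ncard_le_ncard this (hBfin.inter_of_left _)
        omega
      obtain ⟨x, hxl, hxB⟩ := hex
      -- the injection is now a bijection
      obtain ⟨g, hginj, hgmem⟩ := blocking_exists_inj B hB x hxB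
      have hgsurj : Function.Surjective g := by
        refine ((Nat.bijective_iff_injective_and_card g).mpr ⟨hginj, ?_⟩).2
        rw [hline x, Nat.card_coe_set_eq, hcard]
      obtain ⟨m₁, hm₁⟩ := hgsurj ⟨a, ha⟩
      obtain ⟨m₂, hm₂⟩ := hgsurj ⟨b, hb⟩
      have ham₁ : a ∈ m₁.val := by
        have := hgmem m₁; rwa [hm₁] at this
      have hbm₂ : b ∈ m₂.val := by
        have := hgmem m₂; rwa [hm₂] at this
      have hm₁l : m₁.val = l :=
        (Nondegenerate.eq_or_eq ham₁ m₁.2 hal hxl).resolve_left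
          (fun h => hxB (h ▸ ha))
      have hm₂l : m₂.val = l :=
        (Nondegenerate.eq_or_eq hbm₂ m₂.2 hbl hxl).resolve_left
          (fun h => hxB (h ▸ hb))
      have : m₁ = m₂ := Subtype.ext (hm₁l.trans hm₂l.symm)
      rw [this, hm₂] at hm₁
      exact hab (congrArg Subtype.val hm₁).symm
    exact Set.eq_of_subset_of_ncard_le hsub (by omega) (Set.toFinite _)
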